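/- Let G be a finite simple graph on n ≥ 3 vertices in which some vertex x has degree 1. Then G has a spanning connected structure allowing a good R-B-partition of all of G or of G − x: precisely, there is an independent set R with y ∈ R (y the neighbor of x) such that the bipartite graph of R-versus-complement edges in G − x is connected, and either |V(G−x)∖R| is even (giving a good R-B-partition of G−x) or, adding x to B := (V(G−x)∖R) ∪ {x}, the pair (R,B) is a good R-B-partition of G. -/

import Mathlib

open Finset

/-- The bipartite subgraph of `G` consisting of the edges with exactly one endpoint in `R`. -/
def bipartiteBetween {V : Type*} (G : SimpleGraph V) (R : Set V) : SimpleGraph V where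
  Adj a b := G.Adj a b ∧ ((a ∈ R ∧ b ∉ R) ∨ (a ∉ R ∧ b ∈ R))
  symm := by
    constructor
    intro a b h
    exact ⟨h.1.symm, h.2.elim (fun h' => Or.inr ⟨h'.2, h'.1⟩) (fun h' => Or.inl ⟨h'.2, h'.1⟩)⟩
  loopless := by
    constructor
    intro a h
    exact h.2.elim (fun h' => h'.2 h'.1) (fun h' => h'.1 h'.2)

section Aux

variable {W : Type*} [Fintype W] [DecidableEq W]

open scoped Classical in
/-- Closed neighborhood of a finset. -/
noncomputable def clN (H : SimpleGraph W) (R : Finset W) : Finset W :=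
  R ∪ univ.filter fun w => ∃ r ∈ R, H.Adj r w

lemma mem_clN {H : SimpleGraph W} {R : Finset W} {w : W} :
    w ∈ clN H R ↔ w ∈ R ∨ ∃ r ∈ R, H.Adj r w := by
  classical
  simp [clN]

lemma clN_mono {H : SimpleGraph W} {R R' : Finset W} (h : R ⊆ R') : clN H R ⊆ clN H R' := by
  intro w hw
  rw [mem_clN] at hw ⊢
  rcases hw with hw | ⟨r, hr, hadj⟩
  · exact Or.inl (h hw)
  · exact Or.inr ⟨r, h hr, hadj⟩

omit [Fintype W] [DecidableEq W] in
lemma bip_mono {H : SimpleGraph W} {R R' : Finset W} (hsub : R ⊆ R')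
    (hind : ∀ a ∈ R', ∀ b ∈ R', ¬H.Adj a b) :
    bipartiteBetween H ↑R ≤ bipartiteBetween H ↑R' := by
  rintro a b ⟨hab, h⟩
  refine ⟨hab, ?_⟩
  simp only [Finset.mem_coe] at h ⊢
  rcases h with ⟨ha, hb⟩ | ⟨ha, hb⟩
  · exact Or.inl ⟨hsub ha, fun hb' => hind _ (hsub ha) _ hb' hab⟩
  · exact Or.inr ⟨fun ha' => hind _ ha' _ (hsub hb) hab, hsub hb⟩

lemma exists_good (H : SimpleGraph W) (hH : H.Connected) (y₀ : W) :
    ∃ R : Finset W, y₀ ∈ R ∧ (∀ a ∈ R, ∀ b ∈ R, ¬H.Adj a b) ∧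
      (bipartiteBetween H ↑R).Connected := by
  suffices h : ∀ n (R : Finset W), (univ \ clN H R).card ≤ n → y₀ ∈ R →
      (∀ a ∈ R, ∀ b ∈ R, ¬H.Adj a b) →
      (∀ w ∈ clN H R, (bipartiteBetween H ↑R).Reachable y₀ w) →
      ∃ R' : Finset W, y₀ ∈ R' ∧ (∀ a ∈ R', ∀ b ∈ R', ¬H.Adj a b) ∧
        (bipartiteBetween H ↑R').Connected by
    refine h (univ \ clN H {y₀}).card {y₀} le_rfl (mem_singleton_self _) ?_ ?_
    · intro a ha b hb
      rw [mem_singleton] at ha hb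
      subst ha; subst hb
      exact fun hadj => H.loopless.irrefl _ hadj
    · intro w hw
      rw [mem_clN] at hw
      rcases hw with hw | ⟨r, hr, hadj⟩
      · rw [mem_singleton] at hw; subst hw; exact SimpleGraph.Reachable.refl _
      · rw [mem_singleton] at hr; subst hr
        refine SimpleGraph.Adj.reachable ⟨hadj, Or.inl ⟨?_, ?_⟩⟩
        · simp
        · simp only [Finset.coe_singleton, Set.mem_singleton_iff]
          exact fun hw => H.loopless.irrefl _ (hw ▸ hadj)
  intro n
  induction n with
  | zero =>
    intro R hcard hy hind hreach
    have hcl : clN H R = univ := by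
      have h0 : univ \ clN H R = ∅ := Finset.card_eq_zero.mp (Nat.le_zero.mp hcard)
      exact Finset.eq_univ_of_forall fun w => by
        by_contra hw
        exact absurd (Finset.mem_sdiff.mpr ⟨mem_univ w, hw⟩) (by simp [h0])
    haveI : Nonempty W := ⟨y₀⟩
    refine ⟨R, hy, hind, SimpleGraph.Connected.mk fun a b => ?_⟩
    exact ((hreach a (hcl ▸ mem_univ a)).symm).trans (hreach b (hcl ▸ mem_univ b))
  | succ n ih =>
    intro R hcard hy hind hreach
    by_cases hcl : clN H R = univ
    · haveI : Nonempty W := ⟨y₀⟩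
      refine ⟨R, hy, hind, SimpleGraph.Connected.mk fun a b => ?_⟩
      exact ((hreach a (hcl ▸ mem_univ a)).symm).trans (hreach b (hcl ▸ mem_univ b))
    · -- find a boundary dart
      obtain ⟨b, hb⟩ : ∃ b, b ∉ clN H R := by
        by_contra hc
        push_neg at hc
        exact hcl (Finset.eq_univ_of_forall hc)
      obtain ⟨p⟩ := hH.preconnected y₀ b
      obtain ⟨d, _, hdS, hdnS⟩ := p.exists_boundary_dart (↑(clN H R))
        (by simpa using mem_clN.mpr (Or.inl hy)) (by simpa using hb)
      set u := d.fst with hu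
      set v := d.snd with hv
      have huv : H.Adj u v := d.adj
      have hucl : u ∈ clN H R := by simpa using hdS
      have hvcl : v ∉ clN H R := by simpa using hdnS
      have hvR : v ∉ R := fun h => hvcl (mem_clN.mpr (Or.inl h))
      have huR : u ∉ R := fun h => hvcl (mem_clN.mpr (Or.inr ⟨u, h, huv⟩))
      have huvne : u ≠ v := fun h => hvcl (h ▸ hucl)
      -- independence of insert v R
      have hnadj : ∀ r ∈ R, ¬H.Adj r v := by
        intro r hr hadj
        exact hvcl (mem_clN.mpr (Or.inr ⟨r, hr, hadj⟩))
      have hind' : ∀ a ∈ insert v R, ∀ b ∈ insert v R, ¬H.Adj a b := by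
        intro a ha c hc
        rw [mem_insert] at ha hc
        rcases ha with rfl | ha
        · rcases hc with rfl | hc
          · exact fun h => H.loopless.irrefl _ h
          · exact fun h => hnadj c hc h.symm
        · rcases hc with rfl | hc
          · exact hnadj a ha
          · exact hind a ha c hc
      have hmono := bip_mono (Finset.subset_insert v R) hind'
      have hreachv : (bipartiteBetween H ↑(insert v R)).Reachable y₀ v := by
        refine ((hreach u hucl).mono hmono).trans (SimpleGraph.Adj.reachable ⟨huv, ?_⟩)
        refine Or.inr ⟨?_, by simp⟩
        simp only [Finset.coe_insert, Set.mem_insert_iff, Finset.mem_coe]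
        exact fun h => h.elim (fun h => huvne h) huR
      have hreach' : ∀ w ∈ clN H (insert v R),
          (bipartiteBetween H ↑(insert v R)).Reachable y₀ w := by
        intro w hw
        by_cases hwcl : w ∈ clN H R
        · exact (hreach w hwcl).mono hmono
        · rw [mem_clN] at hw
          rcases hw with hw | ⟨r, hr, hadj⟩
          · rw [mem_insert] at hw
            rcases hw with rfl | hw
            · exact hreachv
            · exact absurd (mem_clN.mpr (Or.inl hw)) hwcl
          · rw [mem_insert] at hr
            rcases hr with rfl | hr
            · -- w is a neighbor of v
              have hwR : w ∉ R := fun h => hwcl (mem_clN.mpr (Or.inl h))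
              have hwv : w ≠ v := fun h => H.loopless.irrefl _ (h ▸ hadj)
              refine hreachv.trans (SimpleGraph.Adj.reachable ⟨hadj, Or.inl ⟨by simp, ?_⟩⟩)
              simp only [Finset.coe_insert, Set.mem_insert_iff, Finset.mem_coe]
              exact fun h => h.elim (fun h => hwv h) hwR
            · exact absurd (mem_clN.mpr (Or.inr ⟨r, hr, hadj⟩)) hwcl
      refine ih (insert v R) ?_ (mem_insert_of_mem hy) hind' hreach'
      -- cardinality decreases
      have hsub : clN H R ⊆ clN H (insert v R) := clN_mono (Finset.subset_insert v R)
      have hvcl' : v ∈ clN H (insert v R) := mem_clN.mpr (Or.inl (mem_insert_self v R))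
      have : (univ \ clN H (insert v R)).card < (univ \ clN H R).card := by
        apply Finset.card_lt_card
        constructor
        · exact fun w hw => by
            rw [Finset.mem_sdiff] at hw ⊢
            exact ⟨hw.1, fun h => hw.2 (hsub h)⟩
        · intro hsub2
          have := hsub2 (Finset.mem_sdiff.mpr ⟨mem_univ v, hvcl⟩)
          rw [Finset.mem_sdiff] at this
          exact this.2 hvcl'
      omega

end Aux

section WalkAvoid
variable {V : Type*}

lemma walk_avoid (G : SimpleGraph V) (x y : V) (hxy : ∀ a, G.Adj x a → a = y) :
    ∀ (n : ℕ) (a b : V) (ha : a ≠ x) (hb : b ≠ x) (p : G.Walk a b), p.length ≤ n →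
      (G.induce ({x}ᶜ : Set V)).Reachable ⟨a, ha⟩ ⟨b, hb⟩ := by
  intro n
  induction n with
  | zero =>
    intro a b ha hb p hp
    have : a = b := p.eq_of_length_eq_zero (Nat.le_zero.mp hp)
    subst this
    rfl
  | succ n ih =>
    intro a b ha hb p hp
    cases p with
    | nil => rfl
    | @cons _ c _ h q =>
      by_cases hc : c = x
      · cases q with
        | nil => exact absurd hc hb
        | @cons _ d _ h2 q2 =>
          have h2' : G.Adj x d := by rw [← hc]; exact h2
          have had : a = y := hxy a (by rw [← hc]; exact h.symm)
          have hd : d = y := hxy d h2'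
          have hdx : d ≠ x := fun hh => G.loopless.irrefl x (hh ▸ h2')
          have hlen : q2.length ≤ n := by
            simp only [SimpleGraph.Walk.length_cons] at hp
            omega
          have := ih d b hdx hb q2 hlen
          have had' : (⟨a, ha⟩ : ({x}ᶜ : Set V)) = ⟨d, hdx⟩ := by
            apply Subtype.ext
            simp [had, hd]
          rw [had']
          exact this
      · have hadj : (G.induce ({x}ᶜ : Set V)).Adj ⟨a, ha⟩ ⟨c, hc⟩ := h
        have hlen : q.length ≤ n := by
          simp only [SimpleGraph.Walk.length_cons] at hp
          omega
        exact hadj.reachable.trans (ih c b hc hb q hlen)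

lemma induce_compl_connected (G : SimpleGraph V) (hG : G.Connected) (x y : V)
    (hxy : ∀ a, G.Adj x a → a = y) (hyx : y ≠ x) :
    (G.induce ({x}ᶜ : Set V)).Connected := by
  haveI : Nonempty ({x}ᶜ : Set V) := ⟨⟨y, hyx⟩⟩
  refine SimpleGraph.Connected.mk fun a b => ?_
  obtain ⟨p⟩ := hG.preconnected a.1 b.1
  have := walk_avoid G x y hxy p.length a.1 b.1 a.2 b.2 p le_rfl
  simpa using this

end WalkAvoid

/-- if `G` is connected with at least 3 vertices and `x` has degree 1 with
neighbor `y`, then there is an independent set `R ⊆ V∖{x}` with `y ∈ R` whose bipartite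
subgraph in `G − x` is connected, and either `|V(G−x)∖R|` is even (giving a good
`R`-`B`-partition of `G − x`), or adding `x` to the complement gives a good
`R`-`B`-partition of `G`. -/
theorem stmt14 {V : Type*} [Fintype V] [DecidableEq V] (G : SimpleGraph V) [DecidableRel G.Adj]
    (hG : G.Connected) (hcard : 3 ≤ Fintype.card V)
    (x y : V) (hdx : G.degree x = 1) (hNx : G.neighborFinset x = {y}) :
    ∃ R : Finset V, x ∉ R ∧ y ∈ R ∧
      (∀ a ∈ R, ∀ b ∈ R, ¬ G.Adj a b) ∧
      ((bipartiteBetween G ↑R).induce ({x}ᶜ : Set V)).Connected ∧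
      (Even ((Finset.univ.erase x) \ R).card ∨
        (Even ((Finset.univ : Finset V) \ R).card ∧ (bipartiteBetween G ↑R).Connected)) := by
  classical
  have hxy : ∀ a, G.Adj x a → a = y := by
    intro a h
    have := (G.mem_neighborFinset x a).mpr h
    rw [hNx] at this
    exact Finset.mem_singleton.mp this
  have hadjxy : G.Adj x y := by
    have : y ∈ G.neighborFinset x := by rw [hNx]; exact mem_singleton_self y
    exact (G.mem_neighborFinset x y).mp this
  have hyx : y ≠ x := hadjxy.ne'
  -- the induced graph on {x}ᶜ is connected
  have hHconn : (G.induce ({x}ᶜ : Set V)).Connected :=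
    induce_compl_connected G hG x y hxy hyx
  have hyS : y ∈ ({x}ᶜ : Set V) := hyx
  obtain ⟨R₀, hy₀, hind₀, hconn₀⟩ := exists_good (G.induce ({x}ᶜ : Set V)) hHconn ⟨y, hyS⟩
  set R : Finset V := R₀.map (Function.Embedding.subtype _) with hR
  have hmem : ∀ a : ({x}ᶜ : Set V), (↑a ∈ R ↔ a ∈ R₀) := by
    intro a
    constructor
    · intro h
      rw [hR, Finset.mem_map] at h
      obtain ⟨b, hb, hba⟩ := h
      have : b = a := Subtype.ext hba
      exact this ▸ hb
    · intro h
      exact Finset.mem_map_of_mem _ h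
  have hxR : x ∉ R := by
    intro h
    rw [hR, Finset.mem_map] at h
    obtain ⟨b, _, hbx⟩ := h
    exact b.2 hbx
  have hyR : y ∈ R := (hmem ⟨y, hyS⟩).mpr hy₀
  have hindR : ∀ a ∈ R, ∀ b ∈ R, ¬ G.Adj a b := by
    intro a ha b hb
    rw [hR, Finset.mem_map] at ha hb
    obtain ⟨a', ha', rfl⟩ := ha
    obtain ⟨b', hb', rfl⟩ := hb
    exact hind₀ a' ha' b' hb'
  -- transfer the bipartite graph
  have hEq : (bipartiteBetween G ↑R).induce ({x}ᶜ : Set V)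
      = bipartiteBetween (G.induce ({x}ᶜ : Set V)) ↑R₀ := by
    ext a b
    show G.Adj ↑a ↑b ∧ ((↑a ∈ (↑R : Set V) ∧ ↑b ∉ (↑R : Set V)) ∨
        (↑a ∉ (↑R : Set V) ∧ ↑b ∈ (↑R : Set V))) ↔
      G.Adj ↑a ↑b ∧ ((a ∈ (↑R₀ : Set _) ∧ b ∉ (↑R₀ : Set _)) ∨
        (a ∉ (↑R₀ : Set _) ∧ b ∈ (↑R₀ : Set _)))
    simp only [Finset.mem_coe, hmem a, hmem b]
  have hconnInduce : ((bipartiteBetween G ↑R).induce ({x}ᶜ : Set V)).Connected := by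
    rw [hEq]; exact hconn₀
  refine ⟨R, hxR, hyR, hindR, hconnInduce, ?_⟩
  -- full connectivity of the bipartite graph (used in the odd case)
  have hadjB : (bipartiteBetween G ↑R).Adj x y :=
    ⟨hadjxy, Or.inr ⟨fun h => hxR (Finset.mem_coe.mp h), Finset.mem_coe.mpr hyR⟩⟩
  have hBconn : (bipartiteBetween G ↑R).Connected := by
    haveI : Nonempty V := ⟨x⟩
    let hom : (bipartiteBetween G ↑R).induce ({x}ᶜ : Set V) →g bipartiteBetween G ↑R :=
      ⟨Subtype.val, fun {u v} h => h⟩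
    have key : ∀ c : V, (bipartiteBetween G ↑R).Reachable c y := by
      intro c
      by_cases hc : c = x
      · subst hc; exact hadjB.reachable
      · have := hconnInduce.preconnected ⟨c, hc⟩ ⟨y, hyS⟩
        exact this.map hom
    exact SimpleGraph.Connected.mk fun a b => (key a).trans (key b).symm
  -- parity
  have h1 : (univ \ R).card = ((univ.erase x) \ R).card + 1 := by
    rw [show (univ : Finset V) \ R = insert x ((univ.erase x) \ R) from ?_]
    · rw [Finset.card_insert_of_notMem (by simp)]
    · ext w
      simp only [Finset.mem_sdiff, Finset.mem_insert, Finset.mem_erase, Finset.mem_univ,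
        true_and, and_true]
      constructor
      · intro h
        by_cases hwx : w = x
        · exact Or.inl hwx
        · exact Or.inr ⟨hwx, h⟩
      · rintro (rfl | ⟨-, h⟩)
        · exact hxR
        · exact h
  rcases Nat.even_or_odd (((univ.erase x) \ R).card) with he | ho
  · exact Or.inl he
  · refine Or.inr ⟨?_, hBconn⟩
    rw [h1]
    exact ho.add_one
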